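/- arXiv:1406.5557 — 2 statements merged into one kernel-verified Lean document; each statement's English description precedes it below -/
import Mathlib

section
/- For every integer k ≥ 1 and every n ≥ 0, the matrix M_k^{(n)} is doubly stochastic: all its entries are nonnegative, and the sum of the entries in each row and in each column is equal to 1. -/
open Matrix

/-- Equivalence identifying `Fin (2^n) ⊕ Fin (2^n)` with `Fin (2^(n+1))`. -/
def blockEquiv (n : ℕ) : Fin (2 ^ n) ⊕ Fin (2 ^ n) ≃ Fin (2 ^ (n + 1)) :=
  finSumFinEquiv.trans (finCongr (by rw [pow_succ, mul_two]))

/-- Assemble a `2^(n+1) × 2^(n+1)` matrix from four `2^n × 2^n` blocks. -/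
noncomputable def mkBlock {n : ℕ} (A B C D : Matrix (Fin (2 ^ n)) (Fin (2 ^ n)) ℝ) :
    Matrix (Fin (2 ^ (n + 1))) (Fin (2 ^ (n + 1))) ℝ :=
  Matrix.reindex (blockEquiv n) (blockEquiv n) (Matrix.fromBlocks A B C D)

lemma mkBlock_apply {n : ℕ} (A B C D : Matrix (Fin (2 ^ n)) (Fin (2 ^ n)) ℝ) (p q) :
    mkBlock A B C D p q =
      fromBlocks A B C D ((blockEquiv n).symm p) ((blockEquiv n).symm q) := rfl

lemma sum_mkBlock_col {n : ℕ} (A B C D : Matrix (Fin (2 ^ n)) (Fin (2 ^ n)) ℝ) (q) :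
    ∑ p, mkBlock A B C D p q =
      Sum.elim (fun c => (∑ x, A x c) + ∑ x, C x c) (fun c => (∑ x, B x c) + ∑ x, D x c)
        ((blockEquiv n).symm q) := by
  rw [← Equiv.sum_comp (blockEquiv n) (fun p => mkBlock A B C D p q)]
  simp only [mkBlock_apply, Equiv.symm_apply_apply]
  rcases (blockEquiv n).symm q with c | c <;>
    simp [Fintype.sum_sum_type, fromBlocks]

lemma sum_mkBlock_row {n : ℕ} (A B C D : Matrix (Fin (2 ^ n)) (Fin (2 ^ n)) ℝ) (p) :
    ∑ q, mkBlock A B C D p q =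
      Sum.elim (fun r => (∑ x, A r x) + ∑ x, B r x) (fun r => (∑ x, C r x) + ∑ x, D r x)
        ((blockEquiv n).symm p) := by
  rw [← Equiv.sum_comp (blockEquiv n) (fun q => mkBlock A B C D p q)]
  simp only [mkBlock_apply, Equiv.symm_apply_apply]
  rcases (blockEquiv n).symm p with r | r <;>
    simp [Fintype.sum_sum_type, fromBlocks]

/-- The family `a_i^{(n)}`, `i = 0, …, k`, of generators of the BBS with carrier capacity
`k`: `a_i^{(0)} = (1)`, and the block recursions
`a_0^{(n+1)} = [[a_0, a_1], [0, 0]]`, `a_i^{(n+1)} = [[0, a_{i+1}], [a_{i-1}, 0]]` for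
`1 ≤ i ≤ k−1`, `a_k^{(n+1)} = [[0, 0], [a_{k-1}, a_k]]`. -/
noncomputable def aK (k : ℕ) : (n : ℕ) → ℕ → Matrix (Fin (2 ^ n)) (Fin (2 ^ n)) ℝ
  | 0 => fun _ => 1
  | n + 1 => fun i =>
      if i = 0 then mkBlock (aK k n 0) (aK k n 1) 0 0
      else if i = k then mkBlock 0 0 (aK k n (k - 1)) (aK k n k)
      else mkBlock 0 (aK k n (i + 1)) (aK k n (i - 1)) 0

lemma aK_nonneg (k : ℕ) : ∀ n i p q, 0 ≤ aK k n i p q := by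
  intro n
  induction n with
  | zero =>
      intro i p q
      show (0:ℝ) ≤ (1 : Matrix (Fin 1) (Fin 1) ℝ) p q
      rw [Matrix.one_apply]
      split <;> norm_num
  | succ n ih =>
      intro i p q
      show 0 ≤ aK k (n+1) i p q
      simp only [aK]
      split_ifs <;>
      · rw [mkBlock_apply]
        rcases (blockEquiv n).symm p with r | r <;> rcases (blockEquiv n).symm q with c | c <;>
          simp [fromBlocks, ih]

lemma aK_colsum (k : ℕ) (hk : 1 ≤ k) :
    ∀ n, ∀ i ≤ k, ∀ q, ∑ p, aK k n i p q = 1 := by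
  intro n
  induction n with
  | zero =>
      intro i _ q
      show ∑ p, (1 : Matrix (Fin (2^0)) (Fin (2^0)) ℝ) p q = 1
      have hq : ∀ x : Fin (2^0), x = 0 := by decide
      simp [Matrix.one_apply, hq]
  | succ n ih =>
      intro i hi q
      show ∑ p, aK k (n+1) i p q = 1
      simp only [aK]
      split_ifs with h0 hkk
      · rw [sum_mkBlock_col]
        rcases (blockEquiv n).symm q with c | c
        · simpa using ih 0 (by omega) c
        · simpa using ih 1 hk c
      · rw [sum_mkBlock_col]
        rcases (blockEquiv n).symm q with c | c
        · simpa using ih (k-1) (by omega) c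
        · simpa using ih k le_rfl c
      · rw [sum_mkBlock_col]
        rcases (blockEquiv n).symm q with c | c
        · simpa using ih (i-1) (by omega) c
        · simpa using ih (i+1) (by omega) c

lemma aK_rowsum (k : ℕ) (hk : 1 ≤ k) :
    ∀ n p, ∑ i ∈ Finset.range (k+1), ∑ q, aK k n i p q = (k : ℝ) + 1 := by
  obtain ⟨m, rfl⟩ : ∃ m, k = m + 1 := ⟨k - 1, by omega⟩
  set k := m + 1 with hkdef
  intro n
  induction n with
  | zero =>
      intro p
      have h1 : ∀ i : ℕ, ∑ q, (1 : Matrix (Fin (2^0)) (Fin (2^0)) ℝ) p q = 1 := by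
        intro i
        have hq : ∀ x : Fin (2^0), x = 0 := by decide
        simp [Matrix.one_apply, hq]
      calc ∑ i ∈ Finset.range (k+1), ∑ q, aK k 0 i p q
          = ∑ i ∈ Finset.range (k+1), (1:ℝ) := Finset.sum_congr rfl fun i _ => h1 i
        _ = (k : ℝ) + 1 := by
              rw [Finset.sum_const, Finset.card_range, nsmul_eq_mul, mul_one, hkdef]
              push_cast; ring
  | succ n ih =>
      intro p
      -- row sums of the level-n matrices at a fixed row r
      rcases hp : (blockEquiv n).symm p with r | r
      · -- top half
        have h0 : ∑ q, aK k (n+1) 0 p q = (∑ x, aK k n 0 r x) + ∑ x, aK k n 1 r x := by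
          simp only [aK]
          rw [if_pos trivial]
          rw [sum_mkBlock_row, hp]
          simp
        have hmid : ∀ i < m, ∑ q, aK k (n+1) (i+1) p q = ∑ x, aK k n (i+2) r x := by
          intro i hi
          have h1 : (i+1 : ℕ) ≠ 0 := by omega
          have h2 : (i+1 : ℕ) ≠ k := by omega
          simp only [aK, if_neg h1, if_neg h2]
          rw [sum_mkBlock_row, hp]
          simp [show i + 1 + 1 = i + 2 from rfl]
        have hlast : ∑ q, aK k (n+1) k p q = 0 := by
          have h1 : (k : ℕ) ≠ 0 := by omega
          simp only [aK]
          rw [if_neg h1, if_pos trivial]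
          rw [sum_mkBlock_row, hp]
          simp
        rw [Finset.sum_range_succ, Finset.sum_range_succ']
        rw [hlast, h0, Finset.sum_congr rfl fun i hi => hmid i (Finset.mem_range.mp hi)]
        have := ih r
        rw [Finset.sum_range_succ', Finset.sum_range_succ'] at this
        simp only [show ∀ i : ℕ, i + 1 + 1 = i + 2 from fun _ => rfl] at this ⊢
        linarith [this]
      · -- bottom half
        have h0 : ∑ q, aK k (n+1) 0 p q = 0 := by
          simp only [aK]
          rw [if_pos trivial]
          rw [sum_mkBlock_row, hp]
          simp
        have hmid : ∀ i < m, ∑ q, aK k (n+1) (i+1) p q = ∑ x, aK k n i r x := by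
          intro i hi
          have h1 : (i+1 : ℕ) ≠ 0 := by omega
          have h2 : (i+1 : ℕ) ≠ k := by omega
          simp only [aK, if_neg h1, if_neg h2]
          rw [sum_mkBlock_row, hp]
          simp
        have hlast : ∑ q, aK k (n+1) k p q =
            (∑ x, aK k n (k-1) r x) + ∑ x, aK k n k r x := by
          have h1 : (k : ℕ) ≠ 0 := by omega
          simp only [aK]
          rw [if_neg h1, if_pos trivial]
          rw [sum_mkBlock_row, hp]
          simp
        rw [Finset.sum_range_succ, Finset.sum_range_succ']
        rw [hlast, h0, Finset.sum_congr rfl fun i hi => hmid i (Finset.mem_range.mp hi)]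
        have := ih r
        rw [Finset.sum_range_succ, Finset.sum_range_succ] at this
        have hk1 : (k : ℕ) - 1 = m := by omega
        rw [hk1]
        linarith [this]

/-- The transition operator `M_k^{(n)} = (1/(2k+2)) Σ_{i=0}^k (a_i^{(n)} + a_i^{(n)ᵀ})`. -/
noncomputable def MK (k n : ℕ) : Matrix (Fin (2 ^ n)) (Fin (2 ^ n)) ℝ :=
  ((2 * k + 2 : ℝ))⁻¹ • ∑ i ∈ Finset.range (k + 1), (aK k n i + (aK k n i)ᵀ)

lemma MK_apply (k n : ℕ) (p q : Fin (2 ^ n)) :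
    MK k n p q =
      (2 * (k:ℝ) + 2)⁻¹ * ∑ i ∈ Finset.range (k + 1), (aK k n i p q + aK k n i q p) := by
  simp [MK, Matrix.sum_apply]

lemma MK_sum_row (k n : ℕ) (hk : 1 ≤ k) (p : Fin (2 ^ n)) :
    ∑ q, MK k n p q = 1 := by
  have expand : ∑ q, MK k n p q =
      (2 * (k:ℝ) + 2)⁻¹ *
        ∑ i ∈ Finset.range (k + 1), ((∑ q, aK k n i p q) + ∑ q, aK k n i q p) := by
    simp only [MK_apply]
    rw [← Finset.mul_sum, Finset.sum_comm]
    congr 1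
    exact Finset.sum_congr rfl fun i _ => Finset.sum_add_distrib
  rw [expand]
  have h1 : ∑ i ∈ Finset.range (k + 1), ((∑ q, aK k n i p q) + ∑ q, aK k n i q p) =
      ((k:ℝ) + 1) + ((k:ℝ) + 1) := by
    rw [Finset.sum_add_distrib, aK_rowsum k hk n p]
    have h2 : ∑ i ∈ Finset.range (k + 1), ∑ q, aK k n i q p =
        ∑ i ∈ Finset.range (k + 1), (1:ℝ) :=
      Finset.sum_congr rfl fun i hi =>
        aK_colsum k hk n i (by have := Finset.mem_range.mp hi; omega) p
    rw [h2, Finset.sum_const, Finset.card_range, nsmul_eq_mul, mul_one]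
    push_cast
    ring
  rw [h1]
  have hne : (2 * (k:ℝ) + 2) ≠ 0 := by positivity
  field_simp
  ring

/-- For every `k ≥ 1` and `n ≥ 0`, the matrix `M_k⁽ⁿ⁾` is doubly
stochastic: all entries are nonnegative and every row and every column sums to `1`. -/
theorem MK_doublyStochastic (k n : ℕ) (hk : 1 ≤ k) :
    (∀ i j, 0 ≤ MK k n i j) ∧
      (∀ i, ∑ j, MK k n i j = 1) ∧
      (∀ j, ∑ i, MK k n i j = 1) := by
  refine ⟨fun p q => ?_, fun p => MK_sum_row k n hk p, fun q => ?_⟩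
  · rw [MK_apply]
    apply mul_nonneg (by positivity)
    exact Finset.sum_nonneg fun i _ => add_nonneg (aK_nonneg k n i p q) (aK_nonneg k n i q p)
  · have : ∑ p, MK k n p q = ∑ p, MK k n q p := by
      apply Finset.sum_congr rfl
      intro p _
      rw [MK_apply, MK_apply]
      congr 1
      exact Finset.sum_congr rfl fun i _ => add_comm _ _
    rw [this]
    exact MK_sum_row k n hk q
end

section
/- Let M be a symmetric real N × N stochastic matrix. Then M is ergodic if and only if the following two conditions hold: (1) the eigenspace of M for the eigenvalue 1 is one-dimensional, and (2) −1 is not an eigenvalue of M. -/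
open Matrix

/-- A real `N × N` matrix is stochastic if its entries are nonnegative and each row sums
to `1`. -/
def IsStochastic {N : ℕ} (M : Matrix (Fin N) (Fin N) ℝ) : Prop :=
  (∀ i j, 0 ≤ M i j) ∧ ∀ i, ∑ j, M i j = 1

/-- A real `N × N` matrix is ergodic if some power `M^s`, `s ≥ 1`, has all entries
strictly positive. -/
def IsErgodic {N : ℕ} (M : Matrix (Fin N) (Fin N) ℝ) : Prop :=
  ∃ s : ℕ, 1 ≤ s ∧ ∀ i j, 0 < (M ^ s) i j

namespace ErgodicAux

/-- Powers of stochastic matrices are stochastic. -/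
lemma pow_stochastic {N : ℕ} {M : Matrix (Fin N) (Fin N) ℝ} (h : IsStochastic M) (s : ℕ) :
    IsStochastic (M ^ s) := by
  induction s with
  | zero =>
    refine ⟨fun i j => ?_, fun i => ?_⟩
    · simp only [pow_zero, Matrix.one_apply]
      split <;> norm_num
    · simp [pow_zero, Matrix.one_apply]
  | succ n ih =>
    refine ⟨fun i j => ?_, fun i => ?_⟩
    · rw [pow_succ, Matrix.mul_apply]
      exact Finset.sum_nonneg fun k _ => mul_nonneg (ih.1 i k) (h.1 k j)
    · simp only [pow_succ, Matrix.mul_apply]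
      rw [Finset.sum_comm]
      calc ∑ k, ∑ j, (M ^ n) i k * M k j = ∑ k, (M ^ n) i k * ∑ j, M k j := by
            simp [Finset.mul_sum]
        _ = ∑ k, (M ^ n) i k := by simp [h.2]
        _ = 1 := ih.2 i

/-- A fixed vector of a positive stochastic matrix is constant. -/
lemma const_of_fixed {N : ℕ} {A : Matrix (Fin N) (Fin N) ℝ} (hA : IsStochastic A)
    (hpos : ∀ i j, 0 < A i j) {v : Fin N → ℝ} (hv : A *ᵥ v = v) (i j : Fin N) :
    v i = v j := by
  have hne : (Finset.univ : Finset (Fin N)).Nonempty := ⟨i, Finset.mem_univ i⟩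
  obtain ⟨i₀, -, hmax⟩ := Finset.exists_max_image Finset.univ v hne
  have key : ∀ k, v k = v i₀ := by
    intro k
    by_contra hk
    have hklt : v k < v i₀ := lt_of_le_of_ne (hmax k (Finset.mem_univ k)) hk
    have hlt : ∑ m, A i₀ m * v m < ∑ m, A i₀ m * v i₀ := by
      refine Finset.sum_lt_sum (fun m _ => ?_) ⟨k, Finset.mem_univ k, ?_⟩
      · exact mul_le_mul_of_nonneg_left (hmax m (Finset.mem_univ m)) (hA.1 i₀ m)
      · exact mul_lt_mul_of_pos_left hklt (hpos i₀ k)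
    have hsum : ∑ m, A i₀ m * v i₀ = v i₀ := by
      rw [← Finset.sum_mul, hA.2 i₀, one_mul]
    have : (A *ᵥ v) i₀ = ∑ m, A i₀ m * v m := rfl
    rw [hv] at this
    linarith
  rw [key i, key j]

/-- Iterating an eigen-equation. -/
lemma pow_mulVec_eig {N : ℕ} {M : Matrix (Fin N) (Fin N) ℝ} {v : Fin N → ℝ} {μ : ℝ}
    (h : M *ᵥ v = μ • v) (s : ℕ) : (M ^ s) *ᵥ v = μ ^ s • v := by
  induction s with
  | zero => simp
  | succ n ih =>
    rw [pow_succ', ← Matrix.mulVec_mulVec, ih, Matrix.mulVec_smul, h, smul_smul, ← pow_succ]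

/-- Eigenvalues of a stochastic matrix lie in `[-1, 1]`. -/
lemma abs_eig_le_one {N : ℕ} {M : Matrix (Fin N) (Fin N) ℝ} (hst : IsStochastic M)
    {v : Fin N → ℝ} {μ : ℝ} (hv : M *ᵥ v = μ • v) (hv0 : v ≠ 0) : |μ| ≤ 1 := by
  obtain ⟨i₁, hi₁⟩ : ∃ i, v i ≠ 0 := by
    by_contra h; push_neg at h; exact hv0 (funext h)
  have hne : (Finset.univ : Finset (Fin N)).Nonempty := ⟨i₁, Finset.mem_univ i₁⟩
  obtain ⟨i₀, -, hmax⟩ := Finset.exists_max_image Finset.univ (fun k => |v k|) hne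
  have hpos : 0 < |v i₀| := lt_of_lt_of_le (abs_pos.2 hi₁) (hmax i₁ (Finset.mem_univ i₁))
  have h1 : |μ| * |v i₀| ≤ |v i₀| := by
    have h2 : (M *ᵥ v) i₀ = μ * v i₀ := by rw [hv]; rfl
    calc |μ| * |v i₀| = |μ * v i₀| := (abs_mul μ (v i₀)).symm
      _ = |∑ k, M i₀ k * v k| := by rw [← h2]; rfl
      _ ≤ ∑ k, |M i₀ k * v k| := Finset.abs_sum_le_sum_abs _ _
      _ = ∑ k, M i₀ k * |v k| := by
            refine Finset.sum_congr rfl fun k _ => ?_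
            rw [abs_mul, abs_of_nonneg (hst.1 i₀ k)]
      _ ≤ ∑ k, M i₀ k * |v i₀| := by
            refine Finset.sum_le_sum fun k _ => ?_
            exact mul_le_mul_of_nonneg_left (hmax k (Finset.mem_univ k)) (hst.1 i₀ k)
      _ = |v i₀| := by rw [← Finset.sum_mul, hst.2 i₀, one_mul]
  exact le_of_mul_le_mul_right (by linarith) hpos

end ErgodicAux

open ErgodicAux

/-- A symmetric real stochastic matrix is ergodic iff the eigenspace of the
eigenvalue `1` is one-dimensional and `−1` is not an eigenvalue. -/
theorem ergodic_iff_spectral {N : ℕ} (hN : 0 < N) (M : Matrix (Fin N) (Fin N) ℝ)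
    (hsymm : M.IsSymm) (hstoch : IsStochastic M) :
    IsErgodic M ↔
      Module.finrank ℝ (Module.End.eigenspace (Matrix.mulVecLin M) 1) = 1 ∧
        ¬ Module.End.HasEigenvalue (Matrix.mulVecLin M) (-1) := by
  have : NeZero N := ⟨hN.ne'⟩
  set c : Fin N → ℝ := fun _ => 1 with hc_def
  have hc0 : c ≠ 0 := by
    intro h
    have := congrFun h ⟨0, hN⟩
    simp [hc_def] at this
  have hMc : M *ᵥ c = c := by
    funext i
    simp only [Matrix.mulVec, dotProduct, hc_def, mul_one]
    exact hstoch.2 i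
  have hc_mem : c ∈ Module.End.eigenspace (Matrix.mulVecLin M) 1 := by
    rw [Module.End.mem_eigenspace_iff]
    simpa [Matrix.mulVecLin_apply] using hMc
  constructor
  · rintro ⟨s, hs1, hpos⟩
    have hMs := pow_stochastic hstoch s
    -- any eigenvector for eigenvalue 1 is constant
    have hconst : ∀ v ∈ Module.End.eigenspace (Matrix.mulVecLin M) 1, ∀ i j, v i = v j := by
      intro v hv i j
      rw [Module.End.mem_eigenspace_iff] at hv
      have hv' : M *ᵥ v = v := by simpa [Matrix.mulVecLin_apply] using hv
      have : (M ^ s) *ᵥ v = v := by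
        have := pow_mulVec_eig (μ := 1) (by simpa using hv') s
        simpa using this
      exact const_of_fixed hMs hpos this i j
    have hspan : Module.End.eigenspace (Matrix.mulVecLin M) 1 = Submodule.span ℝ {c} := by
      apply le_antisymm
      · intro v hv
        rw [Submodule.mem_span_singleton]
        exact ⟨v ⟨0, hN⟩, by funext i; have := hconst v hv ⟨0, hN⟩ i; simpa [hc_def] using this⟩
      · rw [Submodule.span_le, Set.singleton_subset_iff]
        exact hc_mem
    constructor
    · rw [hspan]; exact finrank_span_singleton hc0
    · intro hneg
      obtain ⟨v, hv_mem, hv0⟩ := hneg.exists_hasEigenvector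
      rw [Module.End.mem_eigenspace_iff] at hv_mem
      have hv' : M *ᵥ v = (-1 : ℝ) • v := by simpa [Matrix.mulVecLin_apply] using hv_mem
      have h2s : (M ^ (2 * s)) *ᵥ v = v := by
        have := pow_mulVec_eig hv' (2 * s)
        simpa [pow_mul] using this
      have h2spos : ∀ i j, 0 < (M ^ (2 * s)) i j := by
        intro i j
        have : M ^ (2 * s) = (M ^ s) * (M ^ s) := by rw [← pow_add, two_mul]
        rw [this, Matrix.mul_apply]
        exact Finset.sum_pos (fun k _ => mul_pos (hpos i k) (hpos k j))
          ⟨⟨0, hN⟩, Finset.mem_univ _⟩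
      have hconstv : ∀ i j, v i = v j :=
        const_of_fixed (pow_stochastic hstoch (2 * s)) h2spos h2s
      -- v is a multiple of c, hence M *ᵥ v = v, contradiction with M *ᵥ v = -v
      have hvfix : M *ᵥ v = v := by
        funext i
        have : ∀ k, v k = v i := fun k => hconstv k i
        simp only [Matrix.mulVec, dotProduct]
        calc ∑ k, M i k * v k = ∑ k, M i k * v i := by
              refine Finset.sum_congr rfl fun k _ => by rw [this k]
          _ = v i := by rw [← Finset.sum_mul, hstoch.2 i, one_mul]
      have : v = 0 := by
        have h := hv'.symm.trans hvfix
        funext i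
        have := congrFun h i
        simp only [Pi.smul_apply, smul_eq_mul, neg_one_mul, Pi.zero_apply] at this ⊢
        linarith
      exact hv0 this
  · rintro ⟨hdim, hneg⟩
    -- spectral side
    have hherm : M.IsHermitian := by
      have : Mᴴ = Mᵀ := by ext i j; simp [Matrix.conjTranspose_apply]
      rw [Matrix.IsHermitian, this]; exact hsymm
    set V := hherm.eigenvectorBasis with hV
    set lam := hherm.eigenvalues with hlam
    set w : Fin N → Fin N → ℝ := fun k => (WithLp.equiv 2 (Fin N → ℝ)) (V k) with hw
    have hweig : ∀ k, M *ᵥ w k = lam k • w k := fun k => hherm.mulVec_eigenvectorBasis k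
    have hw0 : ∀ k, w k ≠ 0 := by
      intro k h
      have h1 : ‖V k‖ = 1 := V.orthonormal.1 k
      have : V k = 0 := by
        apply (WithLp.equiv 2 (Fin N → ℝ)).injective
        show w k = (WithLp.equiv 2 (Fin N → ℝ)) 0
        rw [h]; rfl
      rw [this] at h1; simp at h1
    have habs : ∀ k, |lam k| ≤ 1 := fun k => abs_eig_le_one hstoch (hweig k) (hw0 k)
    have hlt : ∀ k, lam k ≠ 1 → |lam k| < 1 := by
      intro k hk1
      rcases lt_or_eq_of_le (habs k) with h | h
      · exact h
      · exfalso
        rcases abs_eq (le_of_lt one_pos) |>.1 h with h1 | h1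
        · exact hk1 h1
        · apply hneg
          apply Module.End.hasEigenvalue_of_hasEigenvector (x := w k)
          refine ⟨Module.End.mem_eigenspace_iff.2 ?_, hw0 k⟩
          rw [Matrix.mulVecLin_apply, hweig k, h1]
    -- eigenspace of 1 is exactly the constants
    have hspan : Module.End.eigenspace (Matrix.mulVecLin M) 1 = Submodule.span ℝ {c} := by
      symm
      apply Submodule.eq_of_le_of_finrank_le
      · rw [Submodule.span_le, Set.singleton_subset_iff]; exact hc_mem
      · rw [hdim, finrank_span_singleton hc0]
    -- eigenvectors of eigenvalue 1 are constant
    have hconst1 : ∀ k, lam k = 1 → ∀ i j, w k i = w k j := by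
      intro k hk i j
      have hmem : w k ∈ Module.End.eigenspace (Matrix.mulVecLin M) 1 := by
        rw [Module.End.mem_eigenspace_iff, Matrix.mulVecLin_apply, hweig k, hk]
      rw [hspan, Submodule.mem_span_singleton] at hmem
      obtain ⟨a, ha⟩ := hmem
      rw [← ha]; simp [hc_def]
    -- the entry formula
    have hentry : ∀ (s : ℕ) (i j : Fin N),
        (M ^ s) i j = ∑ k, lam k ^ s * (w k j * w k i) := by
      intro s i j
      classical
      have hsingle : (Pi.single j 1 : Fin N → ℝ) = ∑ k, w k j • w k := by
        have h1 : (∑ k, V.repr (EuclideanSpace.single j (1:ℝ)) k • V k)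
            = EuclideanSpace.single j (1:ℝ) := V.sum_repr _
        have h2 : ∀ k, V.repr (EuclideanSpace.single j (1:ℝ)) k = w k j := by
          intro k
          rw [V.repr_apply_apply, EuclideanSpace.inner_single_right]
          simp [hw]
        have h3 := congrArg (WithLp.linearEquiv 2 ℝ (Fin N → ℝ)) h1
        rw [map_sum] at h3
        simp only [_root_.map_smul] at h3
        have heqs : (WithLp.linearEquiv 2 ℝ (Fin N → ℝ)) (EuclideanSpace.single j (1:ℝ))
            = Pi.single j 1 := rfl
        rw [heqs] at h3
        rw [← h3]
        exact Finset.sum_congr rfl fun k _ => by rw [h2 k]; rfl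
      have hmv : (M ^ s) *ᵥ (Pi.single j 1) = ∑ k, w k j • (lam k ^ s • w k) := by
        rw [hsingle, show ∀ x, (M ^ s) *ᵥ x = (M ^ s).mulVecLin x from fun _ => rfl, map_sum]
        refine Finset.sum_congr rfl fun k _ => ?_
        rw [_root_.map_smul]
        congr 1
        rw [Matrix.mulVecLin_apply]
        exact pow_mulVec_eig (hweig k) s
      have hlhs : ((M ^ s) *ᵥ (Pi.single j 1)) i = (M ^ s) i j := by
        rw [Matrix.mulVec_single]
        simp
      rw [← hlhs, hmv]
      rw [Finset.sum_apply]
      refine Finset.sum_congr rfl fun k _ => ?_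
      simp only [Pi.smul_apply, smul_eq_mul]
      ring
    -- the limit of the entries
    classical
    set i0 : Fin N := ⟨0, hN⟩ with hi0
    set S := Finset.univ.filter (fun k => lam k = 1) with hS
    set A : ℝ := ∑ k ∈ S, w k i0 * w k i0 with hA
    have T : ∀ i j, Filter.Tendsto (fun s => (M ^ s) i j) Filter.atTop (nhds A) := by
      intro i j
      have hsplit : ∀ s : ℕ, (M ^ s) i j
          = A + ∑ k ∈ Finset.univ.filter (fun k => ¬ lam k = 1), lam k ^ s * (w k j * w k i) := by
        intro s
        rw [hentry s i j, ← Finset.sum_filter_add_sum_filter_not Finset.univ (fun k => lam k = 1)]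
        congr 1
        rw [hA]
        refine Finset.sum_congr rfl fun k hk => ?_
        rw [Finset.mem_filter] at hk
        rw [hk.2, one_pow, one_mul, hconst1 k hk.2 j i0, hconst1 k hk.2 i i0]
      have htail : Filter.Tendsto
          (fun s => ∑ k ∈ Finset.univ.filter (fun k => ¬ lam k = 1),
            lam k ^ s * (w k j * w k i)) Filter.atTop (nhds 0) := by
        have := tendsto_finset_sum (f := fun k s => lam k ^ s * (w k j * w k i))
          (x := Filter.atTop) (a := fun _ => (0:ℝ))
          (Finset.univ.filter (fun k => ¬ lam k = 1)) (fun k hk => ?_)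
        · simpa using this
        · rw [Finset.mem_filter] at hk
          have h0 := (tendsto_pow_atTop_nhds_zero_of_abs_lt_one (hlt k hk.2)).mul_const
            (w k j * w k i)
          simpa using h0
      have := (tendsto_const_nhds (x := A) (f := Filter.atTop)).add htail
      rw [add_zero] at this
      exact this.congr fun s => (hsplit s).symm
    -- identify A = 1/N
    have hrow : Filter.Tendsto (fun s => ∑ j, (M ^ s) i0 j) Filter.atTop
        (nhds (∑ _j : Fin N, A)) := tendsto_finset_sum _ fun j _ => T i0 j
    have hrow1 : Filter.Tendsto (fun s : ℕ => (1:ℝ)) Filter.atTop (nhds (∑ _j : Fin N, A)) :=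
      hrow.congr fun s => (pow_stochastic hstoch s).2 i0
    have hNA : (N : ℝ) * A = 1 := by
      have := tendsto_nhds_unique hrow1 tendsto_const_nhds
      rw [Finset.sum_const, Finset.card_univ, Fintype.card_fin, nsmul_eq_mul] at this
      exact this
    have hApos : 0 < A := by
      have hNpos : (0:ℝ) < N := by exact_mod_cast hN
      nlinarith
    have hev : ∀ᶠ s in Filter.atTop, ∀ i j : Fin N, 0 < (M ^ s) i j := by
      rw [Filter.eventually_all]
      intro i
      rw [Filter.eventually_all]
      intro j
      exact (T i j).eventually (eventually_gt_nhds hApos)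
    obtain ⟨s, hs1, hspos⟩ := ((Filter.eventually_ge_atTop 1).and hev).exists
    exact ⟨s, hs1, hspos⟩
end
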